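/- Let G be a finitely generated, infinite group that is not torsion-free (i.e., G contains a nonidentity element of finite order). Then G has a connected Cayley graph of finite valency that is not normal: there exist a finite symmetric generating set T of G and an automorphism of Cay(G;T) that is not an affine bijection. -/

import Mathlib

open Pointwise

def cayleyGraph {G : Type*} [Group G] (S : Set G)
    (hsymm : ∀ s ∈ S, s⁻¹ ∈ S) (hid : (1 : G) ∉ S) : SimpleGraph G where
  Adj g h := g⁻¹ * h ∈ S
  symm := by
    constructor
    intro g h hgh
    have h2 := hsymm _ hgh
    simpa [mul_inv_rev] using h2
  loopless := by
    constructor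
    intro g hg
    simp only [inv_mul_cancel] at hg
    exact hid hg

theorem exists_nonnormal_cayley_of_torsion
    {G : Type*} [Group G] [Group.FG G] [Infinite G]
    (htors : ∃ g : G, g ≠ 1 ∧ IsOfFinOrder g) :
    ∃ (T : Set G) (hsymm : ∀ t ∈ T, t⁻¹ ∈ T) (hid : (1 : G) ∉ T),
      T.Finite ∧ Subgroup.closure T = ⊤ ∧
      ∃ ψ : cayleyGraph T hsymm hid ≃g cayleyGraph T hsymm hid,
        ¬ ∃ (α : G ≃* G) (h : G), ∀ x : G, ψ x = h * α x := by
  classical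
  obtain ⟨a, ha1, hafin⟩ := htors
  obtain ⟨S, hS⟩ := (Group.FG.out : ∃ S : Finset G, Subgroup.closure (S : Set G) = ⊤)
  set F : Set G := (Subgroup.zpowers a : Set G) with hFdef
  have hFfin : F.Finite := hafin.finite_zpowers
  have h1F : (1 : G) ∈ F := (Subgroup.zpowers a).one_mem
  have haF : a ∈ F := Subgroup.mem_zpowers a
  have hFmul : ∀ x ∈ F, ∀ y ∈ F, x * y ∈ F := fun x hx y hy =>
    (Subgroup.zpowers a).mul_mem hx hy
  have hFinv : ∀ x ∈ F, x⁻¹ ∈ F := fun x hx => (Subgroup.zpowers a).inv_mem hx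
  set S' : Set G := (S : Set G) ∪ ((S : Set G))⁻¹ with hS'def
  have hS'symm : ∀ s ∈ S', s⁻¹ ∈ S' := by
    rintro s (hs | hs)
    · exact Or.inr (Set.inv_mem_inv.mpr hs)
    · exact Or.inl (by simpa using hs)
  set Q : Set G := F * S' * F with hQdef
  -- Q is invariant under left multiplication by F
  have hQinv : ∀ f ∈ F, ∀ z : G, f * z ∈ Q ↔ z ∈ Q := by
    have key : ∀ f ∈ F, ∀ z ∈ Q, f * z ∈ Q := by
      rintro f hf z ⟨u, hu, v, hv, rfl⟩
      obtain ⟨p, hp, q, hq, rfl⟩ := hu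
      exact ⟨(f * p) * q, Set.mul_mem_mul (hFmul f hf p hp) hq, v, hv, by group⟩
    intro f hf z
    constructor
    · intro h
      have := key f⁻¹ (hFinv f hf) _ h
      simpa using this
    · exact key f hf z
  have hQsymm : ∀ t ∈ Q, t⁻¹ ∈ Q := by
    rintro t ⟨u, hu, v, hv, rfl⟩
    obtain ⟨p, hp, q, hq, rfl⟩ := hu
    refine ⟨v⁻¹ * q⁻¹, Set.mul_mem_mul (hFinv v hv) (hS'symm q hq), p⁻¹, hFinv p hp, by group⟩
  set T : Set G := (Q ∪ F) \ {1} with hTdef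
  have hsymm : ∀ t ∈ T, t⁻¹ ∈ T := by
    rintro t ⟨ht, ht1⟩
    refine ⟨?_, by simpa using fun h => ht1 (by simpa using h)⟩
    rcases ht with ht | ht
    · exact Or.inl (hQsymm t ht)
    · exact Or.inr (hFinv t ht)
  have hid : (1 : G) ∉ T := fun h => h.2 rfl
  have hTfin : T.Finite := by
    apply Set.Finite.diff
    apply Set.Finite.union _ hFfin
    exact (hFfin.mul (S.finite_toSet.union S.finite_toSet.inv)).mul hFfin
  have hTsymm_iff : ∀ t : G, t ∈ T ↔ t⁻¹ ∈ T := by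
    intro t
    exact ⟨fun h => hsymm t h, fun h => by simpa using hsymm t⁻¹ h⟩
  have hclosure : Subgroup.closure T = ⊤ := by
    rw [eq_top_iff, ← hS]
    apply Subgroup.closure_le _ |>.mpr
    intro s hs
    by_cases h1 : s = (1 : G)
    · exact h1 ▸ (Subgroup.closure T).one_mem
    · apply Subgroup.subset_closure
      refine ⟨Or.inl ⟨1 * s, Set.mul_mem_mul h1F (Or.inl hs), 1, h1F, by group⟩, h1⟩
  -- clique lemma
  have lemA : ∀ x ∈ F, ∀ y ∈ F, (x⁻¹ * y ∈ T ↔ x ≠ y) := by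
    intro x hx y hy
    constructor
    · rintro ⟨_, hne⟩ rfl
      exact hne (by simp)
    · intro hne
      refine ⟨Or.inr (hFmul _ (hFinv x hx) _ hy), ?_⟩
      simp only [Set.mem_singleton_iff]
      intro h
      exact hne (by simpa [eq_comm] using (inv_mul_eq_one.mp h))
  -- adjacency between F and complement of F
  have lemB : ∀ x ∈ F, ∀ z, z ∉ F → (x⁻¹ * z ∈ T ↔ z ∈ Q) := by
    intro x hx z hz
    have hzx : x⁻¹ * z ∉ F := by
      intro h
      exact hz (by simpa [mul_assoc] using hFmul x hx _ h)
    have hne : x⁻¹ * z ≠ 1 := by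
      intro h
      exact hz ((inv_mul_eq_one.mp h) ▸ hx)
    constructor
    · rintro ⟨hor, _⟩
      rcases hor with h | h
      · exact (hQinv x⁻¹ (hFinv x hx) z).mp h
      · exact absurd h hzx
    · intro hq
      exact ⟨Or.inl ((hQinv x⁻¹ (hFinv x hx) z).mpr hq), hne⟩
  -- the swap automorphism
  set e : Equiv.Perm G := Equiv.swap 1 a with hedef
  have he_memF : ∀ x ∈ F, e x ∈ F := by
    intro x hx
    rcases Equiv.swap_apply_def 1 a x with _
    by_cases h1 : x = 1
    · simpa [hedef, h1] using haF
    · by_cases h2 : x = a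
      · simpa [hedef, h2] using h1F
      · simpa [hedef, Equiv.swap_apply_of_ne_of_ne h1 h2] using hx
  have he_fix : ∀ x, x ∉ F → e x = x := by
    intro x hx
    have h1 : x ≠ 1 := fun h => hx (h ▸ h1F)
    have h2 : x ≠ a := fun h => hx (h ▸ haF)
    exact Equiv.swap_apply_of_ne_of_ne h1 h2
  have key : ∀ x y : G, ((e x)⁻¹ * (e y) ∈ T ↔ x⁻¹ * y ∈ T) := by
    intro x y
    by_cases hx : x ∈ F <;> by_cases hy : y ∈ F
    · rw [lemA _ (he_memF x hx) _ (he_memF y hy), lemA _ hx _ hy]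
      exact e.injective.ne_iff
    · rw [he_fix y hy, lemB _ (he_memF x hx) _ hy, lemB _ hx _ hy]
    · rw [he_fix x hx, hTsymm_iff (x⁻¹ * e y), hTsymm_iff (x⁻¹ * y)]
      simp only [mul_inv_rev, inv_inv]
      rw [lemB _ (he_memF y hy) _ hx, lemB _ hy _ hx]
    · rw [he_fix x hx, he_fix y hy]
  refine ⟨T, hsymm, hid, hTfin, hclosure, ⟨e, fun {x y} => key x y⟩, ?_⟩
  rintro ⟨α, h, hαh⟩
  have hha : h = a := by
    have := hαh 1
    simpa [hedef, Equiv.swap_apply_left] using this.symm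
  -- pick generic x, y
  obtain ⟨x, hxmem⟩ := (Set.Finite.infinite_compl (by
    exact (Set.finite_singleton (1:G)).insert a : ({a, 1} : Set G).Finite)).nonempty
  obtain ⟨y, hymem⟩ := (Set.Finite.infinite_compl (by
    exact Set.toFinite ({a, 1, x⁻¹, x⁻¹ * a} : Set G))).nonempty
  simp only [Set.mem_compl_iff, Set.mem_insert_iff, Set.mem_singleton_iff, not_or] at hxmem hymem
  obtain ⟨hxa, hx1⟩ := hxmem
  obtain ⟨hya, hy1, hyx, hyxa⟩ := hymem
  have hex : e x = x := Equiv.swap_apply_of_ne_of_ne hx1 hxa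
  have hey : e y = y := Equiv.swap_apply_of_ne_of_ne hy1 hya
  have hexy : e (x * y) = x * y := by
    apply Equiv.swap_apply_of_ne_of_ne
    · intro h'; exact hyx (eq_inv_of_mul_eq_one_right h')
    · intro h'; exact hyxa (by rw [← h']; group)
  have hax : α x = a⁻¹ * x := by
    have hx' : x = a * α x := by have hh : e x = h * α x := hαh x; rw [hex, hha] at hh; exact hh
    exact eq_inv_mul_iff_mul_eq.mpr hx'.symm
  have hay : α y = a⁻¹ * y := by
    have hy' : y = a * α y := by have hh : e y = h * α y := hαh y; rw [hey, hha] at hh; exact hh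
    exact eq_inv_mul_iff_mul_eq.mpr hy'.symm
  have h2 : x * y = a * ((a⁻¹ * x) * (a⁻¹ * y)) := by
    have := hαh (x * y)
    rw [hha] at this
    rw [← hax, ← hay, ← map_mul]
    calc x * y = e (x * y) := hexy.symm
    _ = a * α (x * y) := this
  have h3 : x * y = x * (a⁻¹ * y) := by rw [h2]; group
  have h4 : y = a⁻¹ * y := mul_left_cancel h3
  exact ha1 (inv_eq_one.mp (right_eq_mul.mp h4))
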